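/- Coercivity of the rescaled discrete Stokes–Biot form: with $\mathbb{G}_\epsilon$ defined as in the context, for all $(\mathbf{u},\boldsymbol\eta,p) \in \mathcal{V}^\epsilon_F \times \mathcal{V}^\epsilon_B \times \mathcal{X}^\epsilon$ one has $\mathbb{G}_\epsilon((\mathbf{u},\boldsymbol\eta,p),(\mathbf{u},\boldsymbol\eta,p)) \ge D\,\|(\mathbf{u},\boldsymbol\eta,p)\|^2_{\mathcal{V}^\epsilon_F\times\mathcal{V}^\epsilon_B\times\mathcal{X}^\epsilon}$ with $D = \min\{2\mu_F/C^F_K,\ 2\mu_B/(C^B_K\Delta t),\ c_0/\Delta t,\ k_*\}$, where $C^F_K, C^B_K$ are the weighted Korn constants. In particular, the cross-coupling terms involving $\alpha$, the interface integrals with $\nabla\mathrm{dist}_\Gamma$, and the Beavers–Joseph–Saffman terms all cancel or contribute nonnegatively when testing with the solution itself. -/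

import Mathlib

/-- Coercivity of the rescaled discrete Stokes–Biot form `𝔾_ε`. Abstract
setting: Hilbert spaces `VF` (fluid velocities), `VB` (displacements), `Xp`
(Biot pressures); `aF`, `aE`, `aK` are the viscous, elastic and Darcy forms,
related to the full norms by the weighted Korn inequalities
`‖u‖² ≤ C_K^F aF(u,u)`, `2μ_B ‖η‖² ≤ C_K^B aE(η,η)` and the spectral/Poincaré
bound `k_* ‖p‖² ≤ aK(p,p)`; `Ccpl` collects the antisymmetric coupling terms
(pressure–displacement coupling and interface integrals with `∇ dist_Γ`),
which vanish on the diagonal, and `Sbjs` is the nonnegative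
Beavers–Joseph–Saffman term. Then
`𝔾_ε(z, z) ≥ D ‖z‖²` with
`D = min{2μ_F/C_K^F, 2μ_B/(C_K^B Δt), c₀/Δt, k_*}`. -/
theorem rescaled_form_coercivity {VF VB Xp : Type*}
    [NormedAddCommGroup VF] [InnerProductSpace ℝ VF]
    [NormedAddCommGroup VB] [InnerProductSpace ℝ VB]
    [NormedAddCommGroup Xp] [InnerProductSpace ℝ Xp]
    (ρF ρB c0 μF μB kstar Δt CKF CKB : ℝ)
    (hρF : 0 < ρF) (hρB : 0 < ρB) (hc0 : 0 < c0) (hμF : 0 < μF)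
    (hμB : 0 < μB) (hk : 0 < kstar) (hΔt : 0 < Δt)
    (hCKF : 0 < CKF) (hCKB : 0 < CKB)
    (aF : VF → VF → ℝ) (aE : VB → VB → ℝ) (aK : Xp → Xp → ℝ)
    (Ccpl Sbjs G : VF × VB × Xp → VF × VB × Xp → ℝ)
    (hKornF : ∀ u : VF, ‖u‖ ^ 2 ≤ CKF * aF u u)
    (hKornB : ∀ η : VB, 2 * μB * ‖η‖ ^ 2 ≤ CKB * aE η η)
    (hDarcy : ∀ p : Xp, kstar * ‖p‖ ^ 2 ≤ aK p p)
    (hcpl : ∀ z, Ccpl z z = 0)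
    (hbjs : ∀ z, 0 ≤ Sbjs z z)
    (hG : ∀ (u v : VF) (η φ : VB) (p q : Xp),
      G (u, η, p) (v, φ, q) =
        ρF / Δt * (inner ℝ u v : ℝ) + ρB / Δt ^ 3 * (inner ℝ η φ : ℝ)
          + c0 / Δt * (inner ℝ p q : ℝ)
          + 2 * μF * aF u v + (1 / Δt) * aE η φ + aK p q
          + Ccpl (u, η, p) (v, φ, q) + Sbjs (u, η, p) (v, φ, q)) :
    ∀ (u : VF) (η : VB) (p : Xp),
      min (min (2 * μF / CKF) (2 * μB / (CKB * Δt))) (min (c0 / Δt) kstar)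
          * (‖u‖ ^ 2 + ‖η‖ ^ 2 + ‖p‖ ^ 2)
        ≤ G (u, η, p) (u, η, p) := by
  intro u η p
  set D := min (min (2 * μF / CKF) (2 * μB / (CKB * Δt))) (min (c0 / Δt) kstar) with hD
  rw [hG, hcpl]
  have hDu : D * ‖u‖ ^ 2 ≤ 2 * μF * aF u u := by
    have h1 : D ≤ 2 * μF / CKF := le_trans (min_le_left _ _) (min_le_left _ _)
    have h2 : (2 * μF / CKF) * ‖u‖ ^ 2 ≤ (2 * μF / CKF) * (CKF * aF u u) :=
      mul_le_mul_of_nonneg_left (hKornF u) (by positivity)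
    calc D * ‖u‖ ^ 2 ≤ (2 * μF / CKF) * ‖u‖ ^ 2 :=
          mul_le_mul_of_nonneg_right h1 (by positivity)
      _ ≤ (2 * μF / CKF) * (CKF * aF u u) := h2
      _ = 2 * μF * aF u u := by field_simp
  have hDη : D * ‖η‖ ^ 2 ≤ (1 / Δt) * aE η η := by
    have h1 : D ≤ 2 * μB / (CKB * Δt) := le_trans (min_le_left _ _) (min_le_right _ _)
    have h2 : (1 / (CKB * Δt)) * (2 * μB * ‖η‖ ^ 2) ≤ (1 / (CKB * Δt)) * (CKB * aE η η) :=
      mul_le_mul_of_nonneg_left (hKornB η) (by positivity)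
    calc D * ‖η‖ ^ 2 ≤ (2 * μB / (CKB * Δt)) * ‖η‖ ^ 2 :=
          mul_le_mul_of_nonneg_right h1 (by positivity)
      _ = (1 / (CKB * Δt)) * (2 * μB * ‖η‖ ^ 2) := by ring
      _ ≤ (1 / (CKB * Δt)) * (CKB * aE η η) := h2
      _ = (1 / Δt) * aE η η := by field_simp
  have hDp : D * ‖p‖ ^ 2 ≤ aK p p := by
    have h1 : D ≤ kstar := le_trans (min_le_right _ _) (min_le_right _ _)
    calc D * ‖p‖ ^ 2 ≤ kstar * ‖p‖ ^ 2 :=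
          mul_le_mul_of_nonneg_right h1 (by positivity)
      _ ≤ aK p p := hDarcy p
  have h1 : 0 ≤ ρF / Δt * (inner ℝ u u : ℝ) := by
    have := real_inner_self_nonneg (x := u); positivity
  have h2 : 0 ≤ ρB / Δt ^ 3 * (inner ℝ η η : ℝ) := by
    have := real_inner_self_nonneg (x := η); positivity
  have h3 : 0 ≤ c0 / Δt * (inner ℝ p p : ℝ) := by
    have := real_inner_self_nonneg (x := p); positivity
  have h4 := hbjs (u, η, p)
  nlinarith [hDu, hDη, hDp]
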